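/- For any graph G = (V,E), ∑_{W ⊆ V} (−1)^{|W|} D(G[W], x) = ∏_{i ∈ λ_G} (1 + (−x)^i), where λ_G is the multiset of orders (numbers of vertices) of the connected components of G. -/

import Mathlib

open Finset Polynomial

variable {V : Type*}

def dominates (H : SimpleGraph V) (W : Finset V) : Prop :=
  ∀ v : V, v ∈ W ∨ ∃ u ∈ W, H.Adj u v

open scoped Classical in
noncomputable def domPoly [Fintype V] (H : SimpleGraph V) : Polynomial ℤ :=
  ∑ W ∈ Finset.univ.powerset.filter (fun W => dominates H W), X ^ W.card

open scoped Classical in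
noncomputable def compOrders [Fintype V] (H : SimpleGraph V) : Multiset ℕ :=
  (Finset.univ : Finset H.ConnectedComponent).val.map (fun c => Nat.card c.supp)

section aux
variable [Fintype V] [DecidableEq V] (G : SimpleGraph V) [DecidableRel G.Adj]

/-- closed neighborhood of a finset -/
def cN (T : Finset V) : Finset V :=
  T ∪ Finset.univ.filter (fun v => ∃ u ∈ T, G.Adj u v)

lemma subset_cN (T : Finset V) : T ⊆ cN G T := subset_union_left

lemma mem_cN {T : Finset V} {v : V} :
    v ∈ cN G T ↔ v ∈ T ∨ ∃ u ∈ T, G.Adj u v := by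
  simp [cN]

/-- Lemma A: domination polynomial of an induced subgraph, in terms of ambient finsets. -/
lemma domPoly_induce (W : Finset V) :
    domPoly (G.induce (↑W : Set V)) =
      ∑ T ∈ W.powerset.filter (fun T => W ⊆ cN G T), X ^ T.card := by
  classical
  rw [domPoly]
  refine Finset.sum_nbij' (fun T' => T'.map (Function.Embedding.subtype _))
    (fun T => T.subtype (fun x => x ∈ (↑W : Set V))) ?_ ?_ ?_ ?_ ?_
  · intro T' hT'
    simp only [mem_filter, mem_powerset] at hT' ⊢
    constructor
    · intro v hv
      simp only [Finset.mem_map, Function.Embedding.coe_subtype] at hv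
      obtain ⟨⟨a, ha⟩, _, rfl⟩ := hv
      exact ha
    · intro v hv
      rcases hT'.2 ⟨v, hv⟩ with h | ⟨u, hu, hadj⟩
      · exact mem_union_left _ (Finset.mem_map_of_mem _ h)
      · refine mem_union_right _ ?_
        simp only [mem_filter, mem_univ, true_and]
        exact ⟨u, Finset.mem_map_of_mem _ hu, hadj⟩
  · intro T hT
    simp only [mem_filter, mem_powerset] at hT
    refine Finset.mem_filter.2 ⟨Finset.mem_powerset.2 (Finset.subset_univ _), ?_⟩
    intro v
    have hv : (v : V) ∈ cN G T := hT.2 v.2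
    rcases (mem_cN G).1 hv with h | ⟨u, hu, hadj⟩
    · left; simpa [Finset.mem_subtype] using h
    · right
      refine ⟨⟨u, hT.1 hu⟩, ?_, hadj⟩
      simpa [Finset.mem_subtype] using hu
  · intro T' _
    apply Finset.map_injective (Function.Embedding.subtype _)
    rw [Finset.subtype_map]
    refine Finset.filter_true_of_mem fun x hx => ?_
    simp only [Finset.mem_map, Function.Embedding.coe_subtype] at hx
    obtain ⟨⟨a, ha⟩, -, rfl⟩ := hx
    exact ha
  · intro T hT
    simp only [mem_filter, mem_powerset] at hT
    rw [Finset.subtype_map]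
    exact Finset.filter_true_of_mem (fun x hx => hT.1 hx)
  · intro T' hT'
    rw [Finset.card_map]

lemma alternating_sum_zero {R : Type*} [CommRing R] (A : Finset V) :
    ∑ S ∈ A.powerset, (-1 : R) ^ S.card = if A = ∅ then 1 else 0 := by
  classical
  have := Finset.prod_add (fun _ : V => (-1 : R)) (fun _ => 1) A
  simp only [neg_add_cancel, Finset.prod_const, Finset.prod_const_one, mul_one, one_pow] at this
  rw [← this]
  rcases eq_or_ne A ∅ with rfl | h
  · simp
  · rw [if_neg h, zero_pow]
    simpa [Finset.card_eq_zero] using h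

/-- Lemma B: the inner sandwich sum. -/
lemma sandwich_sum {R : Type*} [CommRing R] (T N : Finset V) (hTN : T ⊆ N) :
    ∑ W ∈ Finset.Icc T N, (-1 : R) ^ W.card
      = if N ⊆ T then (-1 : R) ^ T.card else 0 := by
  classical
  have key : ∑ W ∈ Finset.Icc T N, (-1 : R) ^ W.card
      = ∑ S ∈ (N \ T).powerset, (-1 : R) ^ (S.card + T.card) := by
    refine Finset.sum_nbij' (fun W => W \ T) (fun S => S ∪ T) ?_ ?_ ?_ ?_ ?_
    · intro W hW
      rw [Finset.mem_Icc] at hW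
      exact Finset.mem_powerset.2 (sdiff_subset_sdiff hW.2 le_rfl)
    · intro S hS
      rw [Finset.mem_powerset] at hS
      rw [Finset.mem_Icc]
      exact ⟨Finset.subset_union_right, Finset.union_subset ((hS.trans sdiff_subset)) hTN⟩
    · intro W hW
      rw [Finset.mem_Icc] at hW
      exact Finset.sdiff_union_of_subset hW.1
    · intro S hS
      rw [Finset.mem_powerset] at hS
      have hd : Disjoint S T := Finset.disjoint_of_subset_left hS Finset.sdiff_disjoint
      rw [Finset.union_sdiff_cancel_right hd]
    · intro W hW
      rw [Finset.mem_Icc] at hW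
      congr 1
      rw [Finset.card_sdiff_add_card_eq_card hW.1]
  rw [key]
  simp_rw [pow_add, ← Finset.sum_mul, alternating_sum_zero]
  rcases eq_or_ne (N \ T) ∅ with he | he
  · rw [if_pos he, one_mul, if_pos]
    rwa [Finset.sdiff_eq_empty_iff_subset] at he
  · rw [if_neg he, zero_mul, if_neg]
    rwa [Ne, Finset.sdiff_eq_empty_iff_subset] at he

lemma closed_mem_of_reachable {T : Finset V}
    (hT : ∀ u v, u ∈ T → G.Adj u v → v ∈ T) {u v : V} (h : G.Reachable u v)
    (hu : u ∈ T) : v ∈ T := by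
  obtain ⟨p⟩ := h
  induction p with
  | nil => exact hu
  | @cons a b c h p ih => exact ih (hT _ _ hu h)

open scoped Classical in
lemma card_supp (c : G.ConnectedComponent) :
    Nat.card c.supp = (Finset.univ.filter (fun v => G.connectedComponentMk v = c)).card := by
  classical
  have h : (c.supp).toFinset = Finset.univ.filter (fun v => G.connectedComponentMk v = c) := by
    ext v
    simp [SimpleGraph.ConnectedComponent.mem_supp_iff]
  rw [Nat.card_eq_card_toFinset, h]

open scoped Classical in
lemma card_filter_mem (S : Finset G.ConnectedComponent) :
    (Finset.univ.filter (fun v => G.connectedComponentMk v ∈ S)).card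
      = ∑ c ∈ S, (Finset.univ.filter (fun v => G.connectedComponentMk v = c)).card := by
  classical
  have : Finset.univ.filter (fun v => G.connectedComponentMk v ∈ S)
      = S.biUnion (fun c => Finset.univ.filter (fun v => G.connectedComponentMk v = c)) := by
    ext v; simp
  rw [this, Finset.card_biUnion]
  intro c _ d _ hcd
  rw [Function.onFun, Finset.disjoint_left]
  intro v hv hv'
  simp only [mem_filter] at hv hv'
  exact hcd (hv.2 ▸ hv'.2 ▸ rfl)

lemma prod_one_add_aux {α : Type*} (s : Finset α) (n : α → ℕ) :
    (s.val.map ((fun i => 1 + (-X : Polynomial ℤ) ^ i) ∘ n)).prod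
      = ∑ S ∈ s.powerset, (-X : Polynomial ℤ) ^ (∑ c ∈ S, n c) := by
  classical
  have h0 : (s.val.map ((fun i => 1 + (-X : Polynomial ℤ) ^ i) ∘ n)).prod
      = ∏ c ∈ s, (1 + (-X : Polynomial ℤ) ^ (n c)) := rfl
  rw [h0, Finset.prod_add]
  refine Finset.sum_nbij' (fun t => s \ t) (fun t => s \ t) ?_ ?_ ?_ ?_ ?_
  · intro t _; exact Finset.mem_powerset.2 sdiff_subset
  · intro t _; exact Finset.mem_powerset.2 sdiff_subset
  · intro t ht
    rw [Finset.mem_powerset] at ht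
    exact Finset.sdiff_sdiff_eq_self ht
  · intro t ht
    rw [Finset.mem_powerset] at ht
    exact Finset.sdiff_sdiff_eq_self ht
  · intro t ht
    rw [Finset.prod_const_one, one_mul, Finset.prod_pow_eq_pow_sum]

end aux

/-- the alternating sum of domination polynomials of induced subgraphs
equals `∏_{i ∈ λ_G} (1 + (-x)^i)`, the product over the component orders of `G`. -/
theorem stmt_9 [Fintype V] [DecidableEq V] (G : SimpleGraph V) :
    ∑ W ∈ (Finset.univ : Finset V).powerset,
        (-1 : Polynomial ℤ) ^ W.card * domPoly (G.induce (↑W : Set V))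
      = ((compOrders G).map (fun i => 1 + (-X : Polynomial ℤ) ^ i)).prod := by
  classical
  -- Step 1: LHS = sum over closed sets of (-X)^|T|
  have lhs1 : ∑ W ∈ (Finset.univ : Finset V).powerset,
        (-1 : Polynomial ℤ) ^ W.card * domPoly (G.induce (↑W : Set V))
      = ∑ T ∈ (Finset.univ : Finset V).powerset.filter (fun T => cN G T ⊆ T),
          (-X : Polynomial ℤ) ^ T.card := by
    calc ∑ W ∈ (Finset.univ : Finset V).powerset,
        (-1 : Polynomial ℤ) ^ W.card * domPoly (G.induce (↑W : Set V))
        = ∑ W ∈ (Finset.univ : Finset V).powerset,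
            ∑ T ∈ (Finset.univ : Finset V).powerset,
              (if W ∈ Finset.Icc T (cN G T)
                then (-1 : Polynomial ℤ) ^ W.card * X ^ T.card else 0) := by
          refine Finset.sum_congr rfl fun W _ => ?_
          rw [domPoly_induce, Finset.mul_sum, Finset.sum_filter]
          rw [← Finset.sum_subset (Finset.powerset_mono.2 (Finset.subset_univ W))
            (fun T _ hT => ?_)]
          · refine Finset.sum_congr rfl fun T hT => ?_
            rw [Finset.mem_powerset] at hT
            by_cases h : W ⊆ cN G T
            · rw [if_pos h, if_pos (Finset.mem_Icc.2 ⟨hT, h⟩)]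
            · rw [if_neg h, if_neg (fun hc => h (Finset.mem_Icc.1 hc).2)]
          · rw [Finset.mem_powerset] at hT
            rw [if_neg (fun hc => hT (Finset.mem_Icc.1 hc).1)]
      _ = ∑ T ∈ (Finset.univ : Finset V).powerset,
            (∑ W ∈ Finset.Icc T (cN G T), (-1 : Polynomial ℤ) ^ W.card) * X ^ T.card := by
          rw [Finset.sum_comm]
          refine Finset.sum_congr rfl fun T _ => ?_
          rw [Finset.sum_ite_mem, Finset.sum_mul,
            Finset.inter_eq_right.2 (fun W _ => Finset.mem_powerset.2 (Finset.subset_univ W))]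
      _ = ∑ T ∈ (Finset.univ : Finset V).powerset,
            (if cN G T ⊆ T then (-1 : Polynomial ℤ) ^ T.card else 0) * X ^ T.card := by
          refine Finset.sum_congr rfl fun T _ => ?_
          rw [sandwich_sum _ _ (subset_cN G T)]
      _ = _ := by
          rw [Finset.sum_filter]
          refine Finset.sum_congr rfl fun T _ => ?_
          by_cases h : cN G T ⊆ T
          · rw [if_pos h, if_pos h, neg_pow, ← mul_pow]
            ring
          · rw [if_neg h, if_neg h, zero_mul]
  rw [lhs1]
  -- Step 2: RHS = sum over sets of components of (-X)^(sum of orders)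
  rw [compOrders, Multiset.map_map]
  rw [Subsingleton.elim
    (@SimpleGraph.instFintypeConnectedComponent V G
      (fun a b => Classical.propDecidable _) _ (fun a b => Classical.propDecidable _))
    (inferInstance : Fintype G.ConnectedComponent)]
  rw [prod_one_add_aux]
  -- Step 3: the bijection between closed vertex sets and sets of components
  refine Finset.sum_nbij' (fun T => T.image (G.connectedComponentMk))
    (fun S => Finset.univ.filter (fun v => G.connectedComponentMk v ∈ S)) ?_ ?_ ?_ ?_ ?_
  · intro T _; exact Finset.mem_powerset.2 (Finset.subset_univ _)
  · intro S _
    refine Finset.mem_filter.2 ⟨Finset.mem_powerset.2 (Finset.subset_univ _), ?_⟩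
    intro v hv
    rcases (mem_cN G).1 hv with h | ⟨u, hu, hadj⟩
    · exact h
    · simp only [mem_filter, mem_univ, true_and] at hu ⊢
      rw [← SimpleGraph.ConnectedComponent.connectedComponentMk_eq_of_adj hadj]
      exact hu
  · intro T hT
    simp only [Finset.mem_filter, Finset.mem_powerset] at hT
    have hadjT : ∀ u v, u ∈ T → G.Adj u v → v ∈ T := by
      intro u v hu h
      exact hT.2 ((mem_cN G).2 (Or.inr ⟨u, hu, h⟩))
    ext v
    simp only [mem_filter, mem_univ, true_and, Finset.mem_image]
    constructor
    · rintro ⟨u, hu, hmk⟩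
      exact closed_mem_of_reachable G hadjT (SimpleGraph.ConnectedComponent.exact hmk) hu
    · intro hv; exact ⟨v, hv, rfl⟩
  · intro S _
    ext c
    simp only [Finset.mem_image, mem_filter, mem_univ, true_and]
    constructor
    · rintro ⟨v, hv, rfl⟩; exact hv
    · intro hc
      obtain ⟨v, rfl⟩ := c.exists_rep
      exact ⟨v, hc, rfl⟩
  · intro T hT
    simp only [Finset.mem_filter, Finset.mem_powerset] at hT
    have hadjT : ∀ u v, u ∈ T → G.Adj u v → v ∈ T := by
      intro u v hu h
      exact hT.2 ((mem_cN G).2 (Or.inr ⟨u, hu, h⟩))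
    have hTeq : T = Finset.univ.filter
        (fun v => G.connectedComponentMk v ∈ T.image (G.connectedComponentMk)) := by
      ext v
      simp only [mem_filter, mem_univ, true_and, Finset.mem_image]
      constructor
      · intro hv; exact ⟨v, hv, rfl⟩
      · rintro ⟨u, hu, hmk⟩
        exact closed_mem_of_reachable G hadjT (SimpleGraph.ConnectedComponent.exact hmk) hu
    congr 1
    conv_lhs => rw [hTeq]
    rw [card_filter_mem]
    refine Finset.sum_congr rfl fun c _ => ?_
    rw [card_supp]
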